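/- Monte Carlo concentration for the entropic operator: let g₁,...,g_N be i.i.d. real random variables with |g_n| ≤ B almost surely, and suppose B ≤ C·τ for constants C, τ > 0. Let L̂ = -τ·log((1/N)·Σ_n exp(-g_n/τ)) and L = -τ·log E[exp(-g₁/τ)]. Then P(|L̂ - L| ≥ ε) ≤ 2·exp(-c(C)·N·ε²/τ²) where c(C) = 2/((e^C - e^{-C})²·e^{2C}). -/

import Mathlib

open Real MeasureTheory ProbabilityTheory

lemma hoeffding_key (p : ℝ) (hp0 : 0 ≤ p) (hp1 : p ≤ 1) (u : ℝ) :
    (1 - p) + p * Real.exp u ≤ Real.exp (p * u + u ^ 2 / 8) := by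
  set D : ℝ → ℝ := fun u => (1 - p) + p * Real.exp u with hDdef
  have hD : ∀ v, 0 < D v := by
    intro v
    rcases lt_or_eq_of_le hp1 with h | h
    · have : 0 ≤ p * Real.exp v := mul_nonneg hp0 (exp_pos v).le
      simp only [hDdef]; linarith
    · have : p = 1 := h
      simp only [hDdef, this]; simpa using exp_pos v
  set F : ℝ → ℝ := fun u => p * u + u ^ 2 / 8 - Real.log (D u) with hFdef
  set F' : ℝ → ℝ := fun u => p + u / 4 - p * Real.exp u / D u with hF'def
  have hDD : ∀ v, HasDerivAt D (p * Real.exp v) v := fun v =>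
    ((Real.hasDerivAt_exp v).const_mul p).const_add (1 - p)
  have hFD : ∀ v, HasDerivAt F (F' v) v := by
    intro v
    have h1 : HasDerivAt (fun u : ℝ => p * u) p v := by
      simpa using (hasDerivAt_id v).const_mul p
    have h2 : HasDerivAt (fun u : ℝ => u ^ 2 / 8) (v / 4) v := by
      have := (hasDerivAt_pow 2 v).div_const 8
      exact this.congr_deriv (by norm_num; ring)
    have h3 : HasDerivAt (fun u => Real.log (D u)) (p * Real.exp v / D v) v :=
      (hDD v).log (hD v).ne'
    exact (h1.add h2).sub h3
  have hF'D : ∀ v, HasDerivAt F'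
      (1 / 4 - (p * Real.exp v * D v - p * Real.exp v * (p * Real.exp v)) / (D v) ^ 2) v := by
    intro v
    have h1 : HasDerivAt (fun u : ℝ => p + u / 4) (1 / 4) v := by
      simpa using ((hasDerivAt_id v).div_const 4).const_add p
    have h2 : HasDerivAt (fun u => p * Real.exp u / D u)
        ((p * Real.exp v * D v - p * Real.exp v * (p * Real.exp v)) / (D v) ^ 2) v :=
      ((Real.hasDerivAt_exp v).const_mul p).div (hDD v) (hD v).ne'
    exact h1.sub h2
  have hF'mono : Monotone F' := by
    apply monotone_of_deriv_nonneg
    · exact fun v => (hF'D v).differentiableAt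
    · intro v
      rw [(hF'D v).deriv]
      have hx : 0 ≤ 1 - p := by linarith
      have hy : 0 ≤ p * Real.exp v := mul_nonneg hp0 (exp_pos v).le
      have hDv : D v = (1 - p) + p * Real.exp v := rfl
      rw [sub_nonneg, div_le_iff₀ (pow_pos (hD v) 2), hDv]
      nlinarith [sq_nonneg ((1 - p) - p * Real.exp v)]
  have hF'0 : F' 0 = 0 := by
    simp only [hF'def, hDdef]
    norm_num
  have hF0 : F 0 = 0 := by
    simp [hFdef, hDdef]
  have hFnonneg : ∀ v, 0 ≤ F v := by
    intro v
    rcases le_total 0 v with hv | hv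
    · have hmono : MonotoneOn F (Set.Ici 0) := by
        apply monotoneOn_of_deriv_nonneg (convex_Ici 0)
          (fun x _ => (hFD x).differentiableAt.continuousAt.continuousWithinAt)
          (fun x _ => ((hFD x).differentiableAt).differentiableWithinAt)
        intro x hx
        rw [(hFD x).deriv]
        rw [interior_Ici] at hx
        calc (0:ℝ) = F' 0 := hF'0.symm
          _ ≤ F' x := hF'mono (le_of_lt hx)
      have := hmono (Set.self_mem_Ici) (Set.mem_Ici.mpr hv) hv
      linarith [hF0 ▸ this]
    · have hmono : AntitoneOn F (Set.Iic 0) := by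
        apply antitoneOn_of_deriv_nonpos (convex_Iic 0)
          (fun x _ => (hFD x).differentiableAt.continuousAt.continuousWithinAt)
          (fun x _ => ((hFD x).differentiableAt).differentiableWithinAt)
        intro x hx
        rw [(hFD x).deriv]
        rw [interior_Iic] at hx
        calc F' x ≤ F' 0 := hF'mono (le_of_lt hx)
          _ = 0 := hF'0
      have := hmono (Set.mem_Iic.mpr hv) (Set.self_mem_Iic) hv
      linarith [hF0 ▸ this]
  have h := hFnonneg u
  have hlog : Real.log (D u) ≤ p * u + u ^ 2 / 8 := by
    simp only [hFdef] at h; linarith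
  calc D u ≤ Real.exp (Real.log (D u)) := by rw [Real.exp_log (hD u)]
    _ ≤ Real.exp (p * u + u ^ 2 / 8) := exp_le_exp.mpr hlog

lemma integrable_of_abs_le {Ω : Type*} [MeasurableSpace Ω] {μ : Measure Ω} [IsFiniteMeasure μ]
    {f : Ω → ℝ} (hf : AEStronglyMeasurable f μ) {M : ℝ} (h : ∀ᵐ ω ∂μ, |f ω| ≤ M) :
    Integrable f μ :=
  Integrable.mono' (integrable_const M) hf (by simpa using h)

lemma hoeffding_lemma {Ω : Type*} [MeasurableSpace Ω] (μ : Measure Ω) [IsProbabilityMeasure μ]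
    (Y : Ω → ℝ) (hY : Measurable Y) (a b : ℝ) (hab : a ≤ b)
    (hbd : ∀ᵐ ω ∂μ, Y ω ∈ Set.Icc a b) (hmean : ∫ ω, Y ω ∂μ = 0) (s : ℝ) :
    ∫ ω, Real.exp (s * Y ω) ∂μ ≤ Real.exp (s ^ 2 * (b - a) ^ 2 / 8) := by
  have hYint : Integrable Y μ := by
    refine integrable_of_abs_le hY.aestronglyMeasurable (M := |a| + |b|) ?_
    filter_upwards [hbd] with ω hω
    rcases hω with ⟨h1, h2⟩
    rw [abs_le]
    constructor
    · linarith [neg_abs_le a, abs_nonneg b]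
    · linarith [le_abs_self b, abs_nonneg a]
  have ha0 : a ≤ 0 := by
    have h1 : ∫ ω, (a : ℝ) ∂μ ≤ ∫ ω, Y ω ∂μ := by
      apply integral_mono_ae (integrable_const a) hYint
      filter_upwards [hbd] with ω hω using hω.1
    simpa [hmean] using h1
  have hb0 : 0 ≤ b := by
    have h1 : ∫ ω, Y ω ∂μ ≤ ∫ ω, (b : ℝ) ∂μ := by
      apply integral_mono_ae hYint (integrable_const b)
      filter_upwards [hbd] with ω hω using hω.2
    simpa [hmean] using h1
  rcases eq_or_lt_of_le hab with heq | hlt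
  · -- a = b, hence a = b = 0 and Y = 0 a.e.
    have ha : a = 0 := le_antisymm ha0 (heq ▸ hb0)
    have hb : b = 0 := by rw [← heq, ha]
    have hY0 : ∀ᵐ ω ∂μ, Real.exp (s * Y ω) = 1 := by
      filter_upwards [hbd] with ω hω
      have : Y ω = 0 := le_antisymm (hb ▸ hω.2) (ha ▸ hω.1)
      simp [this]
    rw [integral_congr_ae hY0]
    simp only [integral_const, probReal_univ, smul_eq_mul, one_mul]
    calc (1:ℝ) = Real.exp 0 := (Real.exp_zero).symm
      _ ≤ _ := Real.exp_le_exp.mpr (by positivity)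
  · set p : ℝ := -a / (b - a) with hp
    have hba : 0 < b - a := by linarith
    have hp0 : 0 ≤ p := div_nonneg (by linarith) hba.le
    have hp1 : p ≤ 1 := by
      rw [hp, div_le_one hba]; linarith
    set k : ℝ := (Real.exp (s * b) - Real.exp (s * a)) / (b - a) with hk
    set K : ℝ := (b * Real.exp (s * a) - a * Real.exp (s * b)) / (b - a) with hK
    -- pointwise convexity bound
    have hpt : ∀ᵐ ω ∂μ, Real.exp (s * Y ω) ≤ K + Y ω * k := by
      filter_upwards [hbd] with ω hω
      set y := Y ω
      have hθ0 : 0 ≤ (b - y) / (b - a) := div_nonneg (by linarith [hω.2]) hba.le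
      have hθ1 : 0 ≤ (y - a) / (b - a) := div_nonneg (by linarith [hω.1]) hba.le
      have hsum : (b - y) / (b - a) + (y - a) / (b - a) = 1 := by
        field_simp
        ring
      have hconv := convexOn_exp.2 (Set.mem_univ (s * a)) (Set.mem_univ (s * b))
        hθ0 hθ1 hsum
      simp only [smul_eq_mul] at hconv
      have harg : (b - y) / (b - a) * (s * a) + (y - a) / (b - a) * (s * b) = s * y := by
        rw [div_mul_eq_mul_div, div_mul_eq_mul_div, ← add_div,
          div_eq_iff hba.ne']
        ring
      rw [harg] at hconv
      calc Real.exp (s * y) ≤ (b - y) / (b - a) * Real.exp (s * a)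
            + (y - a) / (b - a) * Real.exp (s * b) := hconv
        _ = K + y * k := by
            simp only [hK, hk]
            rw [div_mul_eq_mul_div, div_mul_eq_mul_div, ← add_div,
              mul_div_assoc', ← add_div, div_eq_div_iff hba.ne' hba.ne']
            ring
    -- integrate
    have hint1 : Integrable (fun ω => Real.exp (s * Y ω)) μ := by
      refine integrable_of_abs_le ((hY.const_mul s).exp.aestronglyMeasurable)
        (M := Real.exp (|s| * (|a| + |b|))) ?_
      filter_upwards [hbd] with ω hω
      rw [abs_of_pos (exp_pos _)]
      apply Real.exp_le_exp.mpr
      calc s * Y ω ≤ |s * Y ω| := le_abs_self _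
        _ = |s| * |Y ω| := abs_mul s (Y ω)
        _ ≤ |s| * (|a| + |b|) := by
            apply mul_le_mul_of_nonneg_left _ (abs_nonneg s)
            rw [abs_le]
            constructor <;> [skip; skip] <;>
              first
              | linarith [neg_abs_le a, abs_nonneg b, hω.1]
              | linarith [le_abs_self b, abs_nonneg a, hω.2]
    have hint2 : Integrable (fun ω => K + Y ω * k) μ :=
      (integrable_const K).add (hYint.mul_const k)
    have hI : ∫ ω, Real.exp (s * Y ω) ∂μ ≤ ∫ ω, (K + Y ω * k) ∂μ :=
      integral_mono_ae hint1 hint2 hpt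
    have hRHS : ∫ ω, (K + Y ω * k) ∂μ = K := by
      rw [integral_add (integrable_const K) (hYint.mul_const k), integral_const,
        integral_mul_const, hmean]
      simp
    rw [hRHS] at hI
    -- now bound K
    have hKeq : K = Real.exp (s * a) * ((1 - p) + p * Real.exp (s * (b - a))) := by
      rw [hK, hp]
      have : Real.exp (s * b) = Real.exp (s * a) * Real.exp (s * (b - a)) := by
        rw [← Real.exp_add]; ring_nf
      rw [this]
      field_simp
      ring
    have hkey := hoeffding_key p hp0 hp1 (s * (b - a))
    have hKle : K ≤ Real.exp (s * a + (p * (s * (b - a)) + (s * (b - a)) ^ 2 / 8)) := by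
      rw [hKeq, Real.exp_add]
      exact mul_le_mul_of_nonneg_left hkey (exp_pos _).le
    have hexp_eq : s * a + (p * (s * (b - a)) + (s * (b - a)) ^ 2 / 8)
        = s ^ 2 * (b - a) ^ 2 / 8 := by
      rw [hp]; field_simp; ring
    rw [hexp_eq] at hKle
    linarith

lemma integrable_exp_mul_Icc {Ω : Type*} [MeasurableSpace Ω] {μ : Measure Ω} [IsFiniteMeasure μ]
    {Y : Ω → ℝ} (hY : Measurable Y) {a b : ℝ} (hbd : ∀ᵐ ω ∂μ, Y ω ∈ Set.Icc a b) (s : ℝ) :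
    Integrable (fun ω => Real.exp (s * Y ω)) μ := by
  refine integrable_of_abs_le ((hY.const_mul s).exp.aestronglyMeasurable)
    (M := Real.exp (|s| * (|a| + |b|))) ?_
  filter_upwards [hbd] with ω hω
  rw [abs_of_pos (exp_pos _)]
  apply Real.exp_le_exp.mpr
  calc s * Y ω ≤ |s * Y ω| := le_abs_self _
    _ = |s| * |Y ω| := abs_mul s (Y ω)
    _ ≤ |s| * (|a| + |b|) := by
        apply mul_le_mul_of_nonneg_left _ (abs_nonneg s)
        rw [abs_le]
        exact ⟨by linarith [neg_abs_le a, abs_nonneg b, hω.1],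
          by linarith [le_abs_self b, abs_nonneg a, hω.2]⟩

lemma hoeffding_sum_two_sided {Ω : Type*} [MeasurableSpace Ω] (μ : Measure Ω)
    [IsProbabilityMeasure μ] (N : ℕ) (X : Fin N → Ω → ℝ) (hmeas : ∀ n, Measurable (X n))
    (hindep : iIndepFun X μ)
    (lo hi : ℝ) (hlh : lo < hi)
    (hbd : ∀ n, ∀ᵐ ω ∂μ, X n ω ∈ Set.Icc lo hi)
    (m : ℝ) (hm : ∀ n, ∫ ω, X n ω ∂μ = m)
    (t : ℝ) (ht : 0 < t) :
    μ {ω | (N : ℝ) * t ≤ |∑ n, X n ω - N * m|} ≤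
      ENNReal.ofReal (2 * Real.exp (-2 * N * t ^ 2 / (hi - lo) ^ 2)) := by
  set R : ℝ := hi - lo with hR
  have hR0 : 0 < R := by simp only [hR]; linarith
  set Y : Fin N → Ω → ℝ := fun n ω => X n ω - m with hYdef
  have hYmeas : ∀ n, Measurable (Y n) := fun n => (hmeas n).sub measurable_const
  have hYindep : iIndepFun Y μ :=
    hindep.comp (fun n => fun x => x - m) (fun n => measurable_id.sub measurable_const)
  have hYbd : ∀ n, ∀ᵐ ω ∂μ, Y n ω ∈ Set.Icc (lo - m) (hi - m) := by
    intro n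
    filter_upwards [hbd n] with ω hω
    exact ⟨by simp only [hYdef]; linarith [hω.1], by simp only [hYdef]; linarith [hω.2]⟩
  have hXint : ∀ n, Integrable (X n) μ :=
    fun n => integrable_of_abs_le (hmeas n).aestronglyMeasurable (M := |lo| + |hi|)
      (by filter_upwards [hbd n] with ω hω
          rw [abs_le]
          exact ⟨by linarith [neg_abs_le lo, abs_nonneg hi, hω.1],
            by linarith [le_abs_self hi, abs_nonneg lo, hω.2]⟩)
  have hYmean : ∀ n, ∫ ω, Y n ω ∂μ = 0 := by
    intro n
    have : ∫ ω, Y n ω ∂μ = (∫ ω, X n ω ∂μ) - ∫ (_ : Ω), m ∂μ :=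
      integral_sub (hXint n) (integrable_const m)
    rw [this, hm n, integral_const]
    simp
  -- mgf bound for each Y n
  have hmgf : ∀ s : ℝ, ∀ n, mgf (Y n) μ s ≤ Real.exp (s ^ 2 * R ^ 2 / 8) := by
    intro s n
    have := hoeffding_lemma μ (Y n) (hYmeas n) (lo - m) (hi - m) (by linarith)
      (hYbd n) (hYmean n) s
    simpa [mgf, hR] using this
  have hintexp : ∀ s : ℝ, Integrable (fun ω => Real.exp (s * (∑ n, Y n) ω)) μ := by
    intro s
    exact hYindep.integrable_exp_mul_sum hYmeas
      (fun n _ => integrable_exp_mul_Icc (hYmeas n) (hYbd n) s)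
  have hmgfsum : ∀ s : ℝ, mgf (∑ n, Y n) μ s ≤ Real.exp (s ^ 2 * R ^ 2 / 8) ^ N := by
    intro s
    rw [hYindep.mgf_sum hYmeas Finset.univ]
    calc ∏ n, mgf (Y n) μ s ≤ ∏ _n : Fin N, Real.exp (s ^ 2 * R ^ 2 / 8) :=
          Finset.prod_le_prod (fun n _ => mgf_nonneg) (fun n _ => hmgf s n)
      _ = Real.exp (s ^ 2 * R ^ 2 / 8) ^ N := by
          rw [Finset.prod_const, Finset.card_univ, Fintype.card_fin]
  set s : ℝ := 4 * t / R ^ 2 with hs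
  have hs0 : 0 < s := by positivity
  have hexp_eq : -s * ((N : ℝ) * t) + (N : ℝ) * (s ^ 2 * R ^ 2 / 8)
      = -2 * N * t ^ 2 / R ^ 2 := by
    rw [hs]; field_simp; ring
  -- upper tail
  have hup : (μ {ω | (N : ℝ) * t ≤ (∑ n, Y n) ω}).toReal
      ≤ Real.exp (-2 * N * t ^ 2 / R ^ 2) := by
    calc (μ {ω | (N : ℝ) * t ≤ (∑ n, Y n) ω}).toReal
        ≤ Real.exp (-s * ((N : ℝ) * t)) * mgf (∑ n, Y n) μ s :=
          measure_ge_le_exp_mul_mgf ((N : ℝ) * t) hs0.le (hintexp s)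
      _ ≤ Real.exp (-s * ((N : ℝ) * t)) * Real.exp (s ^ 2 * R ^ 2 / 8) ^ N :=
          mul_le_mul_of_nonneg_left (hmgfsum s) (exp_pos _).le
      _ = Real.exp (-s * ((N : ℝ) * t) + (N : ℝ) * (s ^ 2 * R ^ 2 / 8)) := by
          rw [← Real.exp_nat_mul, ← Real.exp_add]
      _ = Real.exp (-2 * N * t ^ 2 / R ^ 2) := by rw [hexp_eq]
  have hdown : (μ {ω | (∑ n, Y n) ω ≤ -((N : ℝ) * t)}).toReal
      ≤ Real.exp (-2 * N * t ^ 2 / R ^ 2) := by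
    calc (μ {ω | (∑ n, Y n) ω ≤ -((N : ℝ) * t)}).toReal
        ≤ Real.exp (-(-s) * (-((N : ℝ) * t))) * mgf (∑ n, Y n) μ (-s) :=
          measure_le_le_exp_mul_mgf (-((N : ℝ) * t)) (by linarith) (hintexp (-s))
      _ ≤ Real.exp (-s * ((N : ℝ) * t)) * Real.exp ((-s) ^ 2 * R ^ 2 / 8) ^ N := by
          rw [show -(-s) * (-((N : ℝ) * t)) = -s * ((N : ℝ) * t) by ring]
          exact mul_le_mul_of_nonneg_left (hmgfsum (-s)) (exp_pos _).le
      _ = Real.exp (-s * ((N : ℝ) * t) + (N : ℝ) * (s ^ 2 * R ^ 2 / 8)) := by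
          rw [← Real.exp_nat_mul, ← Real.exp_add, neg_pow]
          ring_nf
      _ = Real.exp (-2 * N * t ^ 2 / R ^ 2) := by rw [hexp_eq]
  -- combine
  have hsub : {ω | (N : ℝ) * t ≤ |∑ n, X n ω - N * m|} ⊆
      {ω | (N : ℝ) * t ≤ (∑ n, Y n) ω} ∪ {ω | (∑ n, Y n) ω ≤ -((N : ℝ) * t)} := by
    intro ω hω
    simp only [Set.mem_setOf_eq] at hω
    have hsum : (∑ n, Y n) ω = ∑ n, X n ω - N * m := by
      simp only [Finset.sum_apply, hYdef, Finset.sum_sub_distrib, Finset.sum_const,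
        Finset.card_univ, Fintype.card_fin, nsmul_eq_mul]
    rcases le_abs.mp hω with h | h
    · left; simpa only [Set.mem_setOf_eq, hsum] using h
    · right; simp only [Set.mem_setOf_eq, hsum]; linarith
  calc μ {ω | (N : ℝ) * t ≤ |∑ n, X n ω - N * m|}
      ≤ μ ({ω | (N : ℝ) * t ≤ (∑ n, Y n) ω} ∪ {ω | (∑ n, Y n) ω ≤ -((N : ℝ) * t)}) :=
        measure_mono hsub
    _ ≤ μ {ω | (N : ℝ) * t ≤ (∑ n, Y n) ω} + μ {ω | (∑ n, Y n) ω ≤ -((N : ℝ) * t)} :=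
        measure_union_le _ _
    _ ≤ ENNReal.ofReal (Real.exp (-2 * N * t ^ 2 / R ^ 2))
        + ENNReal.ofReal (Real.exp (-2 * N * t ^ 2 / R ^ 2)) := by
        gcongr
        · rw [← ENNReal.ofReal_toReal (measure_ne_top μ _)]
          exact ENNReal.ofReal_le_ofReal hup
        · rw [← ENNReal.ofReal_toReal (measure_ne_top μ _)]
          exact ENNReal.ofReal_le_ofReal hdown
    _ = ENNReal.ofReal (2 * Real.exp (-2 * N * t ^ 2 / (hi - lo) ^ 2)) := by
        rw [← ENNReal.ofReal_add (exp_pos _).le (exp_pos _).le, hR]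
        ring_nf

lemma log_lipschitz_of_le {c : ℝ} (hc : 0 < c) {x y : ℝ} (hx : c ≤ x) (hy : c ≤ y) :
    |Real.log x - Real.log y| ≤ |x - y| / c := by
  have key : ∀ u v : ℝ, c ≤ u → c ≤ v → v ≤ u →
      Real.log u - Real.log v ≤ (u - v) / c := by
    intro u v hu hv hvu
    have hv0 : 0 < v := lt_of_lt_of_le hc hv
    have hu0 : 0 < u := lt_of_lt_of_le hc hu
    have h1 : Real.log u - Real.log v = Real.log (u / v) := (Real.log_div hu0.ne' hv0.ne').symm
    rw [h1]
    calc Real.log (u / v) ≤ u / v - 1 := Real.log_le_sub_one_of_pos (by positivity)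
      _ = (u - v) / v := by field_simp
      _ ≤ (u - v) / c := by
          apply div_le_div_of_nonneg_left (by linarith) hc hv
  rcases le_total y x with h | h
  · rw [abs_of_nonneg (by linarith [Real.log_le_log (lt_of_lt_of_le hc hy) h] :
      (0:ℝ) ≤ Real.log x - Real.log y),
      abs_of_nonneg (by linarith : (0:ℝ) ≤ x - y)]
    exact key x y hx hy h
  · rw [abs_sub_comm, abs_sub_comm x y,
      abs_of_nonneg (by linarith [Real.log_le_log (lt_of_lt_of_le hc hx) h] :
      (0:ℝ) ≤ Real.log y - Real.log x),
      abs_of_nonneg (by linarith : (0:ℝ) ≤ y - x)]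
    exact key y x hy hx h

/-- Monte Carlo concentration for the entropic operator: for i.i.d. `g₁,…,g_N`
with `|gₙ| ≤ B` a.s. and `B ≤ C·τ`, the empirical entropic soft minimum
`L̂ = -τ·log((1/N)·∑ₙ exp(-gₙ/τ))` concentrates around
`L = -τ·log E[exp(-g₁/τ)]`:
`P(|L̂ - L| ≥ ε) ≤ 2·exp(-c(C)·N·ε²/τ²)` with
`c(C) = 2/((e^C - e^{-C})²·e^{2C})`. -/
theorem entropic_mc_concentration {Ω : Type*} [MeasurableSpace Ω]
    (μ : Measure Ω) [IsProbabilityMeasure μ] (N : ℕ) (hN : 0 < N)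
    (g : Fin N → Ω → ℝ) (hmeas : ∀ n, Measurable (g n))
    (hindep : iIndepFun g μ)
    (hident : ∀ n, IdentDistrib (g n) (g ⟨0, hN⟩) μ μ)
    (B C τ ε : ℝ) (hτ : 0 < τ) (hC : 0 < C) (hε : 0 < ε)
    (hbd : ∀ n, ∀ᵐ ω ∂μ, |g n ω| ≤ B) (hBC : B ≤ C * τ) :
    μ {ω | ε ≤ |(-τ * Real.log ((1 / (N : ℝ)) * ∑ n, Real.exp (-(g n ω) / τ))) -
        (-τ * Real.log (∫ ω', Real.exp (-(g ⟨0, hN⟩ ω') / τ) ∂μ))|} ≤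
      ENNReal.ofReal (2 * Real.exp
        (-(2 / ((Real.exp C - Real.exp (-C))^2 * Real.exp (2 * C))) *
          N * ε^2 / τ^2)) := by
  set φ : ℝ → ℝ := fun x => Real.exp (-x / τ) with hφdef
  have hφmeas : Measurable φ := (measurable_id.neg.div_const τ).exp
  set X : Fin N → Ω → ℝ := fun n ω => Real.exp (-(g n ω) / τ) with hXdef
  have hXφ : ∀ n, X n = φ ∘ g n := fun n => rfl
  have hXmeas : ∀ n, Measurable (X n) := fun n => hφmeas.comp (hmeas n)
  have hXindep : iIndepFun X μ :=
    hindep.comp (fun _ => φ) (fun _ => hφmeas)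
  set lo : ℝ := Real.exp (-C) with hlo
  set hi : ℝ := Real.exp C with hhi
  have hlo0 : 0 < lo := exp_pos _
  have hlh : lo < hi := exp_lt_exp.mpr (by linarith)
  have hbd' : ∀ n, ∀ᵐ ω ∂μ, X n ω ∈ Set.Icc lo hi := by
    intro n
    filter_upwards [hbd n] with ω hω
    have h1 : -(C * τ) ≤ g n ω := by
      have := abs_le.mp (hω.trans hBC)
      linarith [this.1]
    have h2 : g n ω ≤ C * τ := (abs_le.mp (hω.trans hBC)).2
    constructor
    · apply Real.exp_le_exp.mpr
      rw [le_div_iff₀ hτ]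
      linarith
    · apply Real.exp_le_exp.mpr
      rw [div_le_iff₀ hτ]
      linarith
  set m : ℝ := ∫ ω', Real.exp (-(g ⟨0, hN⟩ ω') / τ) ∂μ with hm
  have hmean : ∀ n, ∫ ω, X n ω ∂μ = m := by
    intro n
    have hid : IdentDistrib (X n) (X ⟨0, hN⟩) μ μ := by
      rw [hXφ n, hXφ ⟨0, hN⟩]
      exact (hident n).comp hφmeas
    rw [hid.integral_eq]
  have hXint : ∀ n, Integrable (X n) μ := by
    intro n
    refine integrable_of_abs_le (hXmeas n).aestronglyMeasurable (M := hi) ?_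
    filter_upwards [hbd' n] with ω hω
    rw [abs_of_pos (exp_pos _)]
    exact hω.2
  have hm_lo : lo ≤ m := by
    have : ∫ (_ : Ω), lo ∂μ ≤ ∫ ω, X ⟨0, hN⟩ ω ∂μ := by
      apply integral_mono_ae (integrable_const lo) (hXint _)
      filter_upwards [hbd' ⟨0, hN⟩] with ω hω using hω.1
    rw [hmean ⟨0, hN⟩] at this
    rwa [integral_const, probReal_univ, one_smul] at this
  have hm_hi : m ≤ hi := by
    have : ∫ ω, X ⟨0, hN⟩ ω ∂μ ≤ ∫ (_ : Ω), hi ∂μ := by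
      apply integral_mono_ae (hXint _) (integrable_const hi)
      filter_upwards [hbd' ⟨0, hN⟩] with ω hω using hω.2
    rw [hmean ⟨0, hN⟩] at this
    rwa [integral_const, probReal_univ, one_smul] at this
  set t : ℝ := ε / (τ * hi) with ht_def
  have hhi0 : 0 < hi := exp_pos _
  have ht0 : 0 < t := by positivity
  -- a.e. inclusion of events
  have hincl : ∀ᵐ ω ∂μ, ω ∈ {ω | ε ≤ |(-τ * Real.log ((1 / (N : ℝ)) * ∑ n, Real.exp (-(g n ω) / τ))) -
        (-τ * Real.log (∫ ω', Real.exp (-(g ⟨0, hN⟩ ω') / τ) ∂μ))|} →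
      ω ∈ {ω | (N : ℝ) * t ≤ |∑ n, X n ω - N * m|} := by
    have hall : ∀ᵐ ω ∂μ, ∀ n, X n ω ∈ Set.Icc lo hi := ae_all_iff.mpr hbd'
    filter_upwards [hall] with ω hω hev
    set S : ℝ := ∑ n, X n ω with hS
    set A : ℝ := (1 / (N : ℝ)) * S with hA
    have hN0 : (0:ℝ) < N := Nat.cast_pos.mpr hN
    have hA_lo : lo ≤ A := by
      have hsum : (N : ℝ) * lo ≤ S := by
        calc (N : ℝ) * lo = ∑ _n : Fin N, lo := by
              rw [Finset.sum_const, Finset.card_univ, Fintype.card_fin, nsmul_eq_mul]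
          _ ≤ S := Finset.sum_le_sum (fun n _ => (hω n).1)
      rw [hA, one_div, inv_mul_eq_div, le_div_iff₀ hN0]
      linarith
    have hA_hi : A ≤ hi := by
      have hsum : S ≤ (N : ℝ) * hi := by
        calc S ≤ ∑ _n : Fin N, hi := Finset.sum_le_sum (fun n _ => (hω n).2)
          _ = (N : ℝ) * hi := by
              rw [Finset.sum_const, Finset.card_univ, Fintype.card_fin, nsmul_eq_mul]
      rw [hA, one_div, inv_mul_eq_div, div_le_iff₀ hN0]
      linarith
    -- rewrite hev in terms of A and m
    have hev' : ε ≤ τ * |Real.log A - Real.log m| := by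
      have : (-τ * Real.log A) - (-τ * Real.log m) = τ * (Real.log m - Real.log A) := by ring
      calc ε ≤ |(-τ * Real.log A) - (-τ * Real.log m)| := hev
        _ = τ * |Real.log A - Real.log m| := by
            rw [this, abs_mul, abs_of_pos hτ, abs_sub_comm]
    have hlip : |Real.log A - Real.log m| ≤ |A - m| / lo :=
      log_lipschitz_of_le hlo0 hA_lo hm_lo
    have hinv : (1:ℝ) / lo = hi := by
      rw [hlo, hhi, one_div, ← Real.exp_neg, neg_neg]
    have hAm : ε ≤ τ * hi * |A - m| := by
      calc ε ≤ τ * |Real.log A - Real.log m| := hev'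
        _ ≤ τ * (|A - m| / lo) := mul_le_mul_of_nonneg_left hlip hτ.le
        _ = τ * hi * |A - m| := by
            rw [div_eq_mul_one_div, hinv]; ring
    have hSA : S - (N : ℝ) * m = (N : ℝ) * (A - m) := by
      rw [hA]; field_simp
    rw [hSA, abs_mul, abs_of_pos hN0]
    apply mul_le_mul_of_nonneg_left _ hN0.le
    rw [div_le_iff₀ (by positivity : (0:ℝ) < τ * hi)]
    calc ε ≤ τ * hi * |A - m| := hAm
      _ = |A - m| * (τ * hi) := by ring
  have hmain := hoeffding_sum_two_sided μ N X hXmeas hXindep lo hi hlh hbd' m hmean t ht0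
  calc μ {ω | ε ≤ |(-τ * Real.log ((1 / (N : ℝ)) * ∑ n, Real.exp (-(g n ω) / τ))) -
        (-τ * Real.log (∫ ω', Real.exp (-(g ⟨0, hN⟩ ω') / τ) ∂μ))|}
      ≤ μ {ω | (N : ℝ) * t ≤ |∑ n, X n ω - N * m|} := measure_mono_ae hincl
    _ ≤ ENNReal.ofReal (2 * Real.exp (-2 * N * t ^ 2 / (hi - lo) ^ 2)) := hmain
    _ = ENNReal.ofReal (2 * Real.exp
        (-(2 / ((Real.exp C - Real.exp (-C))^2 * Real.exp (2 * C))) * N * ε^2 / τ^2)) := by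
        congr 2
        rw [ht_def, hhi, hlo]
        have h2C : Real.exp (2 * C) = Real.exp C * Real.exp C := by
          rw [two_mul, Real.exp_add]
        rw [h2C]
        have hRne : Real.exp C - Real.exp (-C) ≠ 0 := by
          have := hlh; rw [hlo, hhi] at this; linarith
        field_simp
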